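/- arXiv:2304.00801 — 3 statements merged into one kernel-verified Lean document; each statement's English description precedes it below -/
import Mathlib

section
/- For any m ∈ M with ‖m‖₁ > 0, every minimizer c of the soft-Dice loss SD_m over M satisfies ‖m‖₁² ≤ ‖c‖₁ ≤ 1. -/
open MeasureTheory Filter

noncomputable section

/-- The unit cube `[0,1]^n`. -/
def cube (n : ℕ) : Set (Fin n → ℝ) := Set.univ.pi fun _ => Set.Icc (0:ℝ) 1

/-- The (normalized) Lebesgue measure on the unit cube. -/
def lam (n : ℕ) : Measure (Fin n → ℝ) := volume.restrict (cube n)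

/-- The `L¹`-volume `‖f‖₁ = ∫ f dλ` (for nonnegative `f`). -/
def vol1 (n : ℕ) (f : (Fin n → ℝ) → ℝ) : ℝ := ∫ ω, f ω ∂(lam n)

/-- The Dice score `D_m(s) = 2∫ s·m dλ / (‖s‖₁ + ‖m‖₁)`. -/
def Dice (n : ℕ) (m s : (Fin n → ℝ) → ℝ) : ℝ :=
  2 * (∫ ω, s ω * m ω ∂(lam n)) / (vol1 n s + vol1 n m)

/-- The soft-Dice loss `SD_m(c) = 1 - 2∫ c·m dλ / (‖c‖₁ + ‖m‖₁)`. -/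
def softDice (n : ℕ) (m c : (Fin n → ℝ) → ℝ) : ℝ :=
  1 - 2 * (∫ ω, c ω * m ω ∂(lam n)) / (vol1 n c + vol1 n m)

/-- Membership in `M`: measurable with values in `[0,1]`. -/
def MemM (n : ℕ) (m : (Fin n → ℝ) → ℝ) : Prop :=
  Measurable m ∧ ∀ ω, m ω ∈ Set.Icc (0:ℝ) 1

/-- Membership in `S`: measurable with values in `{0,1}`. -/
def MemS (n : ℕ) (s : (Fin n → ℝ) → ℝ) : Prop :=
  Measurable s ∧ ∀ ω, s ω = 0 ∨ s ω = 1

/-- The set of soft-Dice values over `M`. -/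
def SDvals (n : ℕ) (m : (Fin n → ℝ) → ℝ) : Set ℝ :=
  {x : ℝ | ∃ c, MemM n c ∧ x = softDice n m c}

/-- The set of Dice values over `S`. -/
def Dvals (n : ℕ) (m : (Fin n → ℝ) → ℝ) : Set ℝ :=
  {x : ℝ | ∃ s, MemS n s ∧ x = Dice n m s}


lemma lam_prob (n : ℕ) : IsProbabilityMeasure (lam n) := by
  constructor
  rw [lam, Measure.restrict_apply_univ]
  rw [cube, volume_pi_pi]
  simp [Real.volume_Icc]

lemma memM_integrable (n : ℕ) (f : (Fin n → ℝ) → ℝ) (hf : MemM n f) :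
    Integrable f (lam n) := by
  have := lam_prob n
  refine (integrable_const (1:ℝ)).mono' hf.1.aestronglyMeasurable ?_
  filter_upwards with ω
  have h := hf.2 ω
  rw [Real.norm_eq_abs, abs_of_nonneg h.1]
  exact h.2

lemma memM_mul (n : ℕ) (f g : (Fin n → ℝ) → ℝ) (hf : MemM n f) (hg : MemM n g) :
    MemM n (fun ω => f ω * g ω) := by
  refine ⟨hf.1.mul hg.1, fun ω => ?_⟩
  have h1 := hf.2 ω; have h2 := hg.2 ω
  exact ⟨mul_nonneg h1.1 h2.1, mul_le_one₀ h1.2 h2.1 h2.2⟩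

lemma vol1_nonneg (n : ℕ) (f : (Fin n → ℝ) → ℝ) (hf : MemM n f) : 0 ≤ vol1 n f :=
  integral_nonneg fun ω => (hf.2 ω).1

lemma vol1_le_one (n : ℕ) (f : (Fin n → ℝ) → ℝ) (hf : MemM n f) : vol1 n f ≤ 1 := by
  have := lam_prob n
  have : vol1 n f ≤ ∫ _ω, (1:ℝ) ∂(lam n) :=
    integral_mono (memM_integrable n f hf) (integrable_const 1) fun ω => (hf.2 ω).2
  simpa using this

lemma inner_le_left (n : ℕ) (f g : (Fin n → ℝ) → ℝ) (hf : MemM n f) (hg : MemM n g) :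
    (∫ ω, f ω * g ω ∂(lam n)) ≤ vol1 n f := by
  refine integral_mono (memM_integrable n _ (memM_mul n f g hf hg)) (memM_integrable n f hf)
    fun ω => ?_
  have h1 := hf.2 ω; have h2 := hg.2 ω
  calc f ω * g ω ≤ f ω * 1 := by nlinarith [h1.1, h2.2]
  _ = f ω := mul_one _

lemma inner_le_right (n : ℕ) (f g : (Fin n → ℝ) → ℝ) (hf : MemM n f) (hg : MemM n g) :
    (∫ ω, f ω * g ω ∂(lam n)) ≤ vol1 n g := by
  refine integral_mono (memM_integrable n _ (memM_mul n f g hf hg)) (memM_integrable n g hg)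
    fun ω => ?_
  have h1 := hf.2 ω; have h2 := hg.2 ω
  nlinarith [h1.2, h2.1]

lemma inner_nonneg (n : ℕ) (f g : (Fin n → ℝ) → ℝ) (hf : MemM n f) (hg : MemM n g) :
    0 ≤ ∫ ω, f ω * g ω ∂(lam n) :=
  integral_nonneg fun ω => mul_nonneg (hf.2 ω).1 (hg.2 ω).1

lemma SDvals_bddBelow (n : ℕ) (m : (Fin n → ℝ) → ℝ) (hm : MemM n m)
    (hpos : 0 < vol1 n m) : ∀ x ∈ SDvals n m, (-1:ℝ) ≤ x := by
  rintro x ⟨c, hc, rfl⟩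
  have hI0 : 0 ≤ ∫ ω, c ω * m ω ∂(lam n) := inner_nonneg n c m hc hm
  have hIm : (∫ ω, c ω * m ω ∂(lam n)) ≤ vol1 n m := inner_le_right n c m hc hm
  have hc0 : 0 ≤ vol1 n c := vol1_nonneg n c hc
  have hden : 0 < vol1 n c + vol1 n m := by linarith
  rw [softDice]
  have : 2 * (∫ ω, c ω * m ω ∂(lam n)) / (vol1 n c + vol1 n m) ≤ 2 := by
    rw [div_le_iff₀ hden]; linarith
  linarith

theorem soft_dice_minimizer_volume_bounds
    (n : ℕ) (m : (Fin n → ℝ) → ℝ) (hm : MemM n m) (hpos : 0 < vol1 n m)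
    (c : (Fin n → ℝ) → ℝ) (hc : MemM n c)
    (hmin : softDice n m c = sInf (SDvals n m)) :
    (vol1 n m) ^ 2 ≤ vol1 n c ∧ vol1 n c ≤ 1 := by
  have hprob := lam_prob n
  set Vm := vol1 n m with hVm
  set Vc := vol1 n c with hVc
  have hc0 : 0 ≤ Vc := vol1_nonneg n c hc
  have hc1 : Vc ≤ 1 := vol1_le_one n c hc
  have hm1 : Vm ≤ 1 := vol1_le_one n m hm
  refine ⟨?_, hc1⟩
  -- compare with constant 1 function
  have hone : MemM n (fun _ => (1:ℝ)) := ⟨measurable_const, fun ω => ⟨zero_le_one, le_refl 1⟩⟩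
  have hmem : softDice n m (fun _ => (1:ℝ)) ∈ SDvals n m := ⟨_, hone, rfl⟩
  have hbdd : BddBelow (SDvals n m) := ⟨-1, fun x hx => SDvals_bddBelow n m hm hpos x hx⟩
  have hle : softDice n m c ≤ softDice n m (fun _ => (1:ℝ)) := by
    rw [hmin]; exact csInf_le hbdd hmem
  have hvol1one : vol1 n (fun _ => (1:ℝ)) = 1 := by
    simp [vol1]
  have hint1 : (∫ ω, (fun _ => (1:ℝ)) ω * m ω ∂(lam n)) = Vm := by
    simp only [one_mul]; rfl
  rw [softDice, softDice, hvol1one, hint1] at hle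
  have hIc : (∫ ω, c ω * m ω ∂(lam n)) ≤ Vc := inner_le_left n c m hc hm
  have hden : 0 < Vc + Vm := by linarith
  have hden1 : 0 < 1 + Vm := by linarith
  have key : 2 * Vm / (1 + Vm) ≤ 2 * (∫ ω, c ω * m ω ∂(lam n)) / (Vc + Vm) := by
    linarith
  rw [div_le_div_iff₀ hden1 hden] at key
  nlinarith [key, hIc, hpos]
end
end

section
/- For every v ∈ (0,1] there exists a measurable m₁ : Ω → [0,1] with ‖m₁‖₁ = v such that some minimizer c of SD_{m₁} over M has ‖c‖₁ = 1. (The upper bound 1 on the volume of soft-Dice minimizers is sharp; e.g., take m₁ = v·1_A + appropriate structure so that m₁ > D*/2 almost everywhere.) -/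
open MeasureTheory Filter

noncomputable section

lemma lam_univ (n : ℕ) : lam n Set.univ = 1 := by
  rw [lam, Measure.restrict_apply_univ]
  simp [cube, Real.volume_Icc_pi]

instance lam_prob_s5 (n : ℕ) : IsProbabilityMeasure (lam n) := ⟨lam_univ n⟩

lemma vol1_const (n : ℕ) (r : ℝ) : vol1 n (fun _ => r) = r := by
  simp [vol1]

lemma vol1_mem (n : ℕ) {c : (Fin n → ℝ) → ℝ} (hc : MemM n c) :
    vol1 n c ∈ Set.Icc (0:ℝ) 1 := by
  obtain ⟨hm, hb⟩ := hc
  have hint : Integrable c (lam n) := by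
    refine Integrable.mono' (integrable_const 1) hm.aestronglyMeasurable ?_
    filter_upwards with ω
    rw [Real.norm_eq_abs, abs_le]
    exact ⟨by linarith [(hb ω).1], (hb ω).2⟩
  constructor
  · exact integral_nonneg fun ω => (hb ω).1
  · calc vol1 n c ≤ ∫ _, (1:ℝ) ∂(lam n) :=
          integral_mono hint (integrable_const 1) fun ω => (hb ω).2
      _ = 1 := by simp

lemma softDice_const (n : ℕ) (v : ℝ) {c : (Fin n → ℝ) → ℝ} :
    softDice n (fun _ => v) c = 1 - 2 * (vol1 n c * v) / (vol1 n c + v) := by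
  simp [softDice, vol1_const, integral_mul_const, vol1]

theorem soft_dice_volume_upper_bound_sharp
    (n : ℕ) (hn : 1 ≤ n) (v : ℝ) (hv : v ∈ Set.Ioc (0:ℝ) 1) :
    ∃ m₁ : (Fin n → ℝ) → ℝ, MemM n m₁ ∧ vol1 n m₁ = v ∧
      ∃ c : (Fin n → ℝ) → ℝ, MemM n c ∧
        softDice n m₁ c = sInf (SDvals n m₁) ∧ vol1 n c = 1 := by
  obtain ⟨hv0, hv1⟩ := hv
  have hmem1 : MemM n (fun _ => (1:ℝ)) := ⟨measurable_const, fun ω => by norm_num⟩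
  have hmemv : MemM n (fun _ => v) := ⟨measurable_const, fun ω => ⟨le_of_lt hv0, hv1⟩⟩
  have hval : softDice n (fun _ => v) (fun _ => (1:ℝ)) = 1 - 2 * v / (1 + v) := by
    rw [softDice_const, vol1_const]; ring_nf
  have hlb : ∀ x ∈ SDvals n (fun _ => v), 1 - 2 * v / (1 + v) ≤ x := by
    rintro x ⟨c, hc, rfl⟩
    rw [softDice_const]
    obtain ⟨ha0, ha1⟩ := vol1_mem n hc
    have h1 : (0:ℝ) < 1 + v := by linarith
    have h2 : (0:ℝ) < vol1 n c + v := by linarith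
    have : 2 * (vol1 n c * v) / (vol1 n c + v) ≤ 2 * v / (1 + v) := by
      rw [div_le_div_iff₀ h2 h1]
      nlinarith [mul_nonneg (mul_nonneg (le_of_lt hv0) (le_of_lt hv0)) (sub_nonneg.mpr ha1)]
    linarith
  refine ⟨fun _ => v, hmemv, vol1_const n v, fun _ => 1, hmem1, ?_, vol1_const n 1⟩
  refine le_antisymm ?_ ?_
  · rw [hval]
    exact le_csInf ⟨_, ⟨fun _ => 1, hmem1, rfl⟩⟩ hlb
  · exact csInf_le ⟨1 - 2 * v / (1 + v), hlb⟩ ⟨fun _ => 1, hmem1, rfl⟩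
end
end

section
/- Continuous calibration: let m ∈ M with ‖m‖₁ > 0 and a ∈ (0,1), and let (c_l) ⊂ M be a relatively compact sequence (in L¹(Ω)) with SD_m(c_l) → inf_{c∈M} SD_m(c). Then D_m(I_{[a,1]}∘c_l) → sup_{s∈S} D_m(s) as l → ∞. -/
open MeasureTheory Filter

noncomputable section

instance (n : ℕ) : IsFiniteMeasure (lam n) := by
  constructor
  rw [lam, Measure.restrict_apply_univ]
  exact (isCompact_univ_pi fun _ => isCompact_Icc).measure_lt_top

lemma bdd_integrable {n : ℕ} {f : (Fin n → ℝ) → ℝ} (hf : Measurable f) (C : ℝ)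
    (h : ∀ ω, |f ω| ≤ C) : Integrable f (lam n) :=
  ⟨hf.aestronglyMeasurable, HasFiniteIntegral.of_bounded (C := C) (ae_of_all _ h)⟩

namespace SDCal
variable {n : ℕ} {m c g : (Fin n → ℝ) → ℝ}

lemma memM_int (h : MemM n c) : Integrable c (lam n) :=
  bdd_integrable h.1 1 fun ω => abs_le.2 ⟨by linarith [(h.2 ω).1], (h.2 ω).2⟩

lemma memM_mul_int (hc : MemM n c) (hm : MemM n m) :
    Integrable (fun ω => c ω * m ω) (lam n) :=
  bdd_integrable (hc.1.mul hm.1) 1 fun ω => abs_le.2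
    ⟨by nlinarith [(hc.2 ω).1, (hm.2 ω).1], by nlinarith [(hc.2 ω).1, (hc.2 ω).2, (hm.2 ω).1, (hm.2 ω).2]⟩

lemma memS_memM (h : MemS n c) : MemM n c :=
  ⟨h.1, fun ω => by rcases h.2 ω with h' | h' <;> rw [h'] <;> norm_num⟩

lemma vol1_nonneg (h : MemM n c) : 0 ≤ vol1 n c :=
  integral_nonneg fun ω => (h.2 ω).1

lemma int_mul_nonneg (hc : MemM n c) (hm : MemM n m) :
    0 ≤ ∫ ω, c ω * m ω ∂(lam n) :=
  integral_nonneg fun ω => mul_nonneg (hc.2 ω).1 (hm.2 ω).1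

lemma two_int_le (hc : MemM n c) (hm : MemM n m) :
    2 * (∫ ω, c ω * m ω ∂(lam n)) ≤ vol1 n c + vol1 n m := by
  have h : (∫ ω, c ω * m ω ∂(lam n)) + (∫ ω, c ω * m ω ∂(lam n)) ≤ vol1 n c + vol1 n m := by
    refine add_le_add (integral_mono (memM_mul_int hc hm) (memM_int hc) fun ω => ?_)
      (integral_mono (memM_mul_int hc hm) (memM_int hm) fun ω => ?_)
    · nlinarith [(hc.2 ω).1, (hm.2 ω).2, (hm.2 ω).1]
    · nlinarith [(hm.2 ω).1, (hc.2 ω).2, (hc.2 ω).1]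
  linarith

lemma dice_nonneg (hc : MemM n c) (hm : MemM n m) : 0 ≤ Dice n m c :=
  div_nonneg (by linarith [int_mul_nonneg hc hm]) (by linarith [vol1_nonneg hc, vol1_nonneg hm])

lemma dice_le_one (hc : MemM n c) (hm : MemM n m) (hpos : 0 < vol1 n m) : Dice n m c ≤ 1 :=
  div_le_one_of_le₀ (two_int_le hc hm) (by linarith [vol1_nonneg hc])

lemma softDice_eq (hc : True) : softDice n m c = 1 - Dice n m c := rfl

lemma integral_expand (hc : MemM n c) (hm : MemM n m) (t : ℝ) :
    ∫ ω, c ω * (2 * m ω - t) ∂(lam n)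
      = 2 * (∫ ω, c ω * m ω ∂(lam n)) - t * vol1 n c := by
  have h1 : ∀ ω, c ω * (2 * m ω - t) = 2 * (c ω * m ω) - t * c ω := fun ω => by ring
  simp only [h1]
  rw [integral_sub ((memM_mul_int hc hm).const_mul 2) ((memM_int hc).const_mul t),
    integral_const_mul, integral_const_mul]
  rfl

lemma memS_threshold (hc : Measurable c) (t : ℝ) :
    MemS n (fun ω => if t ≤ c ω then (1:ℝ) else 0) := by
  refine ⟨Measurable.ite (measurableSet_le measurable_const hc) measurable_const
    measurable_const, fun ω => ?_⟩
  by_cases h : t ≤ c ω <;> simp [h]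

lemma bddAbove_Dvals (hm : MemM n m) (hpos : 0 < vol1 n m) : BddAbove (Dvals n m) := by
  refine ⟨1, fun x hx => ?_⟩
  obtain ⟨s, hs, rfl⟩ := hx
  exact dice_le_one (memS_memM hs) hm hpos

lemma nonempty_Dvals : (Dvals n m).Nonempty :=
  ⟨Dice n m (fun _ => 1), ⟨fun _ => 1, ⟨measurable_const, fun _ => Or.inr rfl⟩, rfl⟩⟩

/-- thresholding improves Dice -/
lemma dice_le_sSup (hm : MemM n m) (hpos : 0 < vol1 n m) (hc : MemM n c) :
    Dice n m c ≤ sSup (Dvals n m) := by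
  set t := Dice n m c with ht
  set s : (Fin n → ℝ) → ℝ := fun ω => if t ≤ 2 * m ω then (1:ℝ) else 0 with hsdef
  have hsS : MemS n s := memS_threshold (hm.1.const_mul 2) t
  have hsM : MemM n s := memS_memM hsS
  have hden : 0 < vol1 n c + vol1 n m := by linarith [vol1_nonneg hc]
  have hkey : 2 * (∫ ω, c ω * m ω ∂(lam n)) = t * (vol1 n c + vol1 n m) := by
    rw [ht, Dice, div_mul_cancel₀]; exact ne_of_gt hden
  have hmono : ∫ ω, c ω * (2 * m ω - t) ∂(lam n) ≤ ∫ ω, s ω * (2 * m ω - t) ∂(lam n) := by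
    refine integral_mono ?_ ?_ fun ω => ?_
    · have := memM_mul_int hc hm
      have h2 := (memM_int hc).const_mul t
      have : Integrable (fun ω => 2 * (c ω * m ω) - t * c ω) (lam n) :=
        ((memM_mul_int hc hm).const_mul 2).sub ((memM_int hc).const_mul t)
      exact this.congr (ae_of_all _ fun ω => by ring)
    · have : Integrable (fun ω => 2 * (s ω * m ω) - t * s ω) (lam n) :=
        ((memM_mul_int hsM hm).const_mul 2).sub ((memM_int hsM).const_mul t)
      exact this.congr (ae_of_all _ fun ω => by ring)
    · by_cases h : t ≤ 2 * m ω
      · simp only [hsdef, if_pos h]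
        nlinarith [(hc.2 ω).2, (hc.2 ω).1]
      · simp only [hsdef, if_neg h]
        nlinarith [(hc.2 ω).1]
  rw [integral_expand hc hm, integral_expand hsM hm, hkey] at hmono
  have hs_dice : t ≤ Dice n m s := by
    rw [Dice, le_div_iff₀ (by linarith [vol1_nonneg hsM])]
    nlinarith
  exact hs_dice.trans (le_csSup (bddAbove_Dvals hm hpos) ⟨s, hsS, rfl⟩)

lemma sSup_nonneg' (hm : MemM n m) (hpos : 0 < vol1 n m) : 0 ≤ sSup (Dvals n m) := by
  obtain ⟨x, s, hs, rfl⟩ := nonempty_Dvals (n := n) (m := m)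
  calc (0:ℝ) ≤ Dice n m s := dice_nonneg (memS_memM hs) hm
  _ ≤ _ := le_csSup (bddAbove_Dvals hm hpos) ⟨s, hs, rfl⟩

lemma sInf_SDvals (hm : MemM n m) (hpos : 0 < vol1 n m) :
    sInf (SDvals n m) = 1 - sSup (Dvals n m) := by
  apply le_antisymm
  · -- for each x ∈ Dvals, 1 - x ∈ SDvals
    have h1 : ∀ x ∈ Dvals n m, sInf (SDvals n m) ≤ 1 - x := by
      rintro x ⟨s, hs, rfl⟩
      exact csInf_le ⟨1 - sSup (Dvals n m), by
        rintro y ⟨c', hc', rfl⟩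
        rw [softDice_eq trivial]
        linarith [dice_le_sSup hm hpos hc']⟩ ⟨s, memS_memM hs, rfl⟩
    have h2 : sSup (Dvals n m) ≤ 1 - sInf (SDvals n m) := by
      apply csSup_le nonempty_Dvals
      intro x hx; linarith [h1 x hx]
    linarith
  · apply le_csInf
    · obtain ⟨x, s, hs, rfl⟩ := nonempty_Dvals (n := n) (m := m)
      exact ⟨softDice n m s, s, memS_memM hs, rfl⟩
    · rintro y ⟨c', hc', rfl⟩
      rw [softDice_eq trivial]
      linarith [dice_le_sSup hm hpos hc']


lemma int_expand2 (hc : MemM n c) (hm : MemM n m) (t : ℝ) :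
    Integrable (fun ω => c ω * (2 * m ω - t)) (lam n) := by
  have : Integrable (fun ω => 2 * (c ω * m ω) - t * c ω) (lam n) :=
    ((memM_mul_int hc hm).const_mul 2).sub ((memM_int hc).const_mul t)
  exact this.congr (ae_of_all _ fun ω => by ring)

lemma int_upper (hm : MemM n m) (hpos : 0 < vol1 n m) (hc : MemM n c) :
    ∫ ω, c ω * (2 * m ω - sSup (Dvals n m)) ∂(lam n)
      ≤ sSup (Dvals n m) * vol1 n m := by
  set t := sSup (Dvals n m)
  have h := dice_le_sSup hm hpos hc
  have hden : 0 < vol1 n c + vol1 n m := by linarith [vol1_nonneg hc]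
  rw [Dice, div_le_iff₀ hden] at h
  rw [integral_expand hc hm]
  nlinarith

lemma maximizer (hm : MemM n m) (hpos : 0 < vol1 n m) (hg : MemM n g)
    (hF : Dice n m g = sSup (Dvals n m)) :
    (∫ ω, g ω * (2 * m ω - sSup (Dvals n m)) ∂(lam n) = sSup (Dvals n m) * vol1 n m)
    ∧ ∀ᵐ ω ∂(lam n), (sSup (Dvals n m) < 2 * m ω → g ω = 1)
        ∧ (2 * m ω < sSup (Dvals n m) → g ω = 0) := by
  set t := sSup (Dvals n m) with htdef
  have hden : 0 < vol1 n g + vol1 n m := by linarith [vol1_nonneg hg]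
  have heq : ∫ ω, g ω * (2 * m ω - t) ∂(lam n) = t * vol1 n m := by
    rw [integral_expand hg hm]
    have : 2 * (∫ ω, g ω * m ω ∂(lam n)) = t * (vol1 n g + vol1 n m) := by
      rw [← hF, Dice, div_mul_cancel₀]; exact ne_of_gt hden
    linarith [this]
  refine ⟨heq, ?_⟩
  -- upper part : g = 1 a.e. on {t < 2m}
  have hup : ∀ᵐ ω ∂(lam n), t < 2 * m ω → g ω = 1 := by
    set c1 : (Fin n → ℝ) → ℝ := fun ω => if t < 2 * m ω then 1 else g ω with hc1def
    have hc1 : MemM n c1 := by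
      refine ⟨Measurable.ite (measurableSet_lt measurable_const (hm.1.const_mul 2))
        measurable_const hg.1, fun ω => ?_⟩
      by_cases h : t < 2 * m ω
      · simp [hc1def, h]
      · simpa [hc1def, h] using hg.2 ω
    have hub := int_upper hm hpos hc1
    set h : (Fin n → ℝ) → ℝ := fun ω => c1 ω * (2 * m ω - t) - g ω * (2 * m ω - t) with hhdef
    have hhnn : (0:(Fin n → ℝ) → ℝ) ≤ h := by
      intro ω
      simp only [hhdef, hc1def, Pi.zero_apply]
      by_cases hlt : t < 2 * m ω
      · simp only [if_pos hlt]
        nlinarith [(hg.2 ω).2]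
      · simp [hlt]
    have hhint : Integrable h (lam n) := (int_expand2 hc1 hm t).sub (int_expand2 hg hm t)
    have hint0 : ∫ ω, h ω ∂(lam n) = 0 := by
      have hle : ∫ ω, h ω ∂(lam n) ≤ 0 := by
        rw [hhdef]
        simp only
        rw [integral_sub (int_expand2 hc1 hm t) (int_expand2 hg hm t), heq]
        linarith [hub]
      have hge : 0 ≤ ∫ ω, h ω ∂(lam n) := integral_nonneg hhnn
      linarith
    have := (integral_eq_zero_iff_of_nonneg hhnn hhint).1 hint0
    filter_upwards [this] with ω hω hlt
    simp only [hhdef, hc1def, if_pos hlt, Pi.zero_apply] at hω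
    nlinarith [hω]
  have hdown : ∀ᵐ ω ∂(lam n), 2 * m ω < t → g ω = 0 := by
    set c1 : (Fin n → ℝ) → ℝ := fun ω => if 2 * m ω < t then 0 else g ω with hc1def
    have hc1 : MemM n c1 := by
      refine ⟨Measurable.ite (measurableSet_lt (hm.1.const_mul 2) measurable_const)
        measurable_const hg.1, fun ω => ?_⟩
      by_cases h : 2 * m ω < t
      · simp [hc1def, h]
      · simpa [hc1def, h] using hg.2 ω
    have hub := int_upper hm hpos hc1
    set h : (Fin n → ℝ) → ℝ := fun ω => c1 ω * (2 * m ω - t) - g ω * (2 * m ω - t) with hhdef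
    have hhnn : (0:(Fin n → ℝ) → ℝ) ≤ h := by
      intro ω
      simp only [hhdef, hc1def, Pi.zero_apply]
      by_cases hlt : 2 * m ω < t
      · simp only [if_pos hlt]
        nlinarith [(hg.2 ω).1]
      · simp [hlt]
    have hhint : Integrable h (lam n) := (int_expand2 hc1 hm t).sub (int_expand2 hg hm t)
    have hint0 : ∫ ω, h ω ∂(lam n) = 0 := by
      have hle : ∫ ω, h ω ∂(lam n) ≤ 0 := by
        rw [hhdef]
        simp only
        rw [integral_sub (int_expand2 hc1 hm t) (int_expand2 hg hm t), heq]
        linarith [hub]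
      have hge : 0 ≤ ∫ ω, h ω ∂(lam n) := integral_nonneg hhnn
      linarith
    have := (integral_eq_zero_iff_of_nonneg hhnn hhint).1 hint0
    filter_upwards [this] with ω hω hlt
    simp only [hhdef, hc1def, if_pos hlt, Pi.zero_apply] at hω
    nlinarith [hω]
  filter_upwards [hup, hdown] with ω h1 h2
  exact ⟨h1, h2⟩


lemma abs_int_le (hc : MemM n c) (hg : MemM n g) {f : (Fin n → ℝ) → ℝ}
    (hf : Integrable f (lam n)) (hb : ∀ ω, |f ω| ≤ |c ω - g ω|) :
    |∫ ω, f ω ∂(lam n)| ≤ ∫ ω, |c ω - g ω| ∂(lam n) := by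
  have hint : Integrable (fun ω => |c ω - g ω|) (lam n) :=
    ((memM_int hc).sub (memM_int hg)).abs
  calc |∫ ω, f ω ∂(lam n)| ≤ ∫ ω, |f ω| ∂(lam n) := by
        simpa [Real.norm_eq_abs] using norm_integral_le_integral_norm f (μ := lam n)
  _ ≤ ∫ ω, |c ω - g ω| ∂(lam n) := integral_mono hf.abs hint hb

lemma dice_cont (hm : MemM n m) (hpos : 0 < vol1 n m) (hg : MemM n g)
    (u : ℕ → (Fin n → ℝ) → ℝ) (hu : ∀ l, MemM n (u l))
    (hL1 : Tendsto (fun l => ∫ ω, |u l ω - g ω| ∂(lam n)) atTop (nhds 0)) :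
    Tendsto (fun l => Dice n m (u l)) atTop (nhds (Dice n m g)) := by
  have hnum : Tendsto (fun l => ∫ ω, u l ω * m ω ∂(lam n)) atTop
      (nhds (∫ ω, g ω * m ω ∂(lam n))) := by
    rw [tendsto_iff_dist_tendsto_zero]
    apply squeeze_zero (fun l => dist_nonneg) _ hL1
    intro l
    rw [Real.dist_eq, ← integral_sub (memM_mul_int (hu l) hm) (memM_mul_int hg hm)]
    refine abs_int_le (hu l) hg (((memM_mul_int (hu l) hm)).sub (memM_mul_int hg hm))
      fun ω => ?_
    have h1 : u l ω * m ω - g ω * m ω = (u l ω - g ω) * m ω := by ring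
    rw [h1, abs_mul]
    calc |u l ω - g ω| * |m ω| ≤ |u l ω - g ω| * 1 := by
          refine mul_le_mul_of_nonneg_left ?_ (abs_nonneg _)
          rw [abs_le]; exact ⟨by linarith [(hm.2 ω).1], (hm.2 ω).2⟩
    _ = |u l ω - g ω| := mul_one _
  have hvol : Tendsto (fun l => vol1 n (u l)) atTop (nhds (vol1 n g)) := by
    rw [tendsto_iff_dist_tendsto_zero]
    apply squeeze_zero (fun l => dist_nonneg) _ hL1
    intro l
    rw [Real.dist_eq, vol1, vol1, ← integral_sub (memM_int (hu l)) (memM_int hg)]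
    exact abs_int_le (hu l) hg ((memM_int (hu l)).sub (memM_int hg)) fun ω => le_refl _
  have hden : Tendsto (fun l => vol1 n (u l) + vol1 n m) atTop
      (nhds (vol1 n g + vol1 n m)) := hvol.add tendsto_const_nhds
  exact ((hnum.const_mul 2).div hden (by have := vol1_nonneg hg; linarith)).congr
    (fun l => rfl)


lemma estimate (hm : MemM n m) (hpos : 0 < vol1 n m) {a : ℝ} (ha : a ∈ Set.Ioo (0:ℝ) 1)
    (hc : MemM n c) (hg : MemM n g) (hF : Dice n m g = sSup (Dvals n m)) :
    |Dice n m (fun ω => if a ≤ c ω then (1:ℝ) else 0) - sSup (Dvals n m)|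
      ≤ ((2 + sSup (Dvals n m)) * (1/a + 1/(1-a)) / vol1 n m)
        * ∫ ω, |c ω - g ω| ∂(lam n) := by
  set t := sSup (Dvals n m) with htdef
  have ht0 : 0 ≤ t := sSup_nonneg' hm hpos
  obtain ⟨heq, hae⟩ := maximizer hm hpos hg hF
  set s : (Fin n → ℝ) → ℝ := fun ω => if a ≤ c ω then (1:ℝ) else 0 with hsdef
  have hsM : MemM n s := memS_memM (memS_threshold hc.1 a)
  set K := (2 + t) * (1/a + 1/(1-a)) with hKdef
  have hK0 : 0 ≤ K := by
    have p1 : 0 < 1/a := one_div_pos.2 ha.1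
    have p2 : 0 < 1/(1-a) := one_div_pos.2 (by linarith [ha.2])
    have : 0 ≤ (2+t) := by linarith
    rw [hKdef]; nlinarith
  have habs : |∫ ω, (s ω * (2 * m ω - t) - g ω * (2 * m ω - t)) ∂(lam n)|
      ≤ K * ∫ ω, |c ω - g ω| ∂(lam n) := by
    have hint1 : Integrable (fun ω => s ω * (2 * m ω - t) - g ω * (2 * m ω - t)) (lam n) :=
      (int_expand2 hsM hm t).sub (int_expand2 hg hm t)
    have hint2 : Integrable (fun ω => K * |c ω - g ω|) (lam n) :=
      (((memM_int hc).sub (memM_int hg)).abs).const_mul K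
    calc |∫ ω, (s ω * (2 * m ω - t) - g ω * (2 * m ω - t)) ∂(lam n)|
        ≤ ∫ ω, |s ω * (2 * m ω - t) - g ω * (2 * m ω - t)| ∂(lam n) := by
          simpa [Real.norm_eq_abs] using
            norm_integral_le_integral_norm (μ := lam n)
              (fun ω => s ω * (2 * m ω - t) - g ω * (2 * m ω - t))
    _ ≤ ∫ ω, K * |c ω - g ω| ∂(lam n) := by
          refine integral_mono_ae hint1.abs hint2 ?_
          filter_upwards [hae] with ω hω
          have hmb := hm.2 ω
          have hcb := hc.2 ω
          have hgb := hg.2 ω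
          have h1 : 0 < a := ha.1
          have h2 : a < 1 := ha.2
          have hfac : s ω * (2 * m ω - t) - g ω * (2 * m ω - t)
              = (s ω - g ω) * (2 * m ω - t) := by ring
          rw [hfac, abs_mul]
          rcases lt_trichotomy t (2 * m ω) with hlt | heqω | hgt
          · have hg1 : g ω = 1 := hω.1 hlt
            by_cases hca : a ≤ c ω
            · simp only [hsdef, if_pos hca, hg1]
              simpa using mul_nonneg hK0 (abs_nonneg (c ω - 1))
            · simp only [hsdef, if_neg hca, hg1]
              push_neg at hca
              have habs1 : |(0:ℝ) - 1| = 1 := by norm_num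
              rw [habs1, one_mul]
              have hm2 : |2 * m ω - t| ≤ 2 + t := by
                rw [abs_le]; constructor <;> nlinarith [hmb.1, hmb.2]
              have hcg : |c ω - 1| = 1 - c ω := by
                rw [abs_of_nonpos (by linarith [hcb.2])]; ring
              rw [hcg]
              have h3 : (2 + t) ≤ K * (1 - c ω) := by
                have hb : (1:ℝ) ≤ (1 - c ω)/(1-a) :=
                  (one_le_div (by linarith)).2 (by linarith)
                have e1 : (0:ℝ) ≤ (2+t) * ((1 - c ω)/a) :=
                  mul_nonneg (by linarith) (div_nonneg (by linarith [hcb.2]) (by linarith))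
                have e2 : (2+t) ≤ (2+t) * ((1 - c ω)/(1-a)) := by
                  nlinarith
                have e3 : K * (1 - c ω)
                    = (2+t) * ((1 - c ω)/a) + (2+t) * ((1 - c ω)/(1-a)) := by
                  rw [hKdef]; field_simp
                linarith
              linarith [hm2, h3]
          · rw [← heqω]
            simp only [sub_self, abs_zero, mul_zero]
            exact mul_nonneg hK0 (abs_nonneg _)
          · have hg0 : g ω = 0 := hω.2 hgt
            by_cases hca : a ≤ c ω
            · simp only [hsdef, if_pos hca, hg0]
              have habs1 : |(1:ℝ) - 0| = 1 := by norm_num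
              rw [habs1, one_mul]
              have hm2 : |2 * m ω - t| ≤ 2 + t := by
                rw [abs_le]; constructor <;> nlinarith [hmb.1, hmb.2]
              have hcg : |c ω - 0| = c ω := by
                rw [sub_zero, abs_of_nonneg hcb.1]
              rw [hcg]
              have h3 : (2 + t) ≤ K * c ω := by
                have hb : (1:ℝ) ≤ c ω / a := (one_le_div h1).2 hca
                have e1 : (0:ℝ) ≤ (2+t) * (c ω/(1-a)) :=
                  mul_nonneg (by linarith) (div_nonneg hcb.1 (by linarith))
                have e2 : (2+t) ≤ (2+t) * (c ω/a) := by nlinarith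
                have e3 : K * c ω = (2+t) * (c ω/a) + (2+t) * (c ω/(1-a)) := by
                  rw [hKdef]; field_simp
                linarith
              linarith [hm2, h3]
            · simp only [hsdef, if_neg hca, hg0]
              simpa using mul_nonneg hK0 (abs_nonneg (c ω - 0))
    _ = K * ∫ ω, |c ω - g ω| ∂(lam n) := integral_const_mul K _
  -- now relate Dice s - t to that integral
  have hdenpos : 0 < vol1 n s + vol1 n m := by linarith [vol1_nonneg hsM]
  have hnum : ∫ ω, (s ω * (2 * m ω - t) - g ω * (2 * m ω - t)) ∂(lam n)
      = 2 * (∫ ω, s ω * m ω ∂(lam n)) - t * (vol1 n s + vol1 n m) := by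
    rw [integral_sub (int_expand2 hsM hm t) (int_expand2 hg hm t), heq,
      integral_expand hsM hm]
    ring
  have hdiff : Dice n m s - t
      = (∫ ω, (s ω * (2 * m ω - t) - g ω * (2 * m ω - t)) ∂(lam n))
        / (vol1 n s + vol1 n m) := by
    rw [hnum, Dice]
    field_simp
  rw [hdiff, abs_div, abs_of_pos hdenpos]
  rw [div_le_iff₀ hdenpos]
  have hintnn : 0 ≤ ∫ ω, |c ω - g ω| ∂(lam n) := integral_nonneg fun ω => abs_nonneg _
  have hVle : vol1 n m ≤ vol1 n s + vol1 n m := by linarith [vol1_nonneg hsM]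
  calc |∫ ω, (s ω * (2 * m ω - t) - g ω * (2 * m ω - t)) ∂(lam n)|
      ≤ K * ∫ ω, |c ω - g ω| ∂(lam n) := habs
  _ = (K / vol1 n m * ∫ ω, |c ω - g ω| ∂(lam n)) * vol1 n m := by field_simp
  _ ≤ (K / vol1 n m * ∫ ω, |c ω - g ω| ∂(lam n)) * (vol1 n s + vol1 n m) := by
      exact mul_le_mul_of_nonneg_left hVle
        (mul_nonneg (div_nonneg hK0 hpos.le) hintnn)

end SDCal

theorem soft_dice_calibrated_to_dice
    (n : ℕ) (m : (Fin n → ℝ) → ℝ) (hm : MemM n m) (hpos : 0 < vol1 n m)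
    (a : ℝ) (ha : a ∈ Set.Ioo (0:ℝ) 1)
    (c : ℕ → (Fin n → ℝ) → ℝ) (hc : ∀ l, MemM n (c l))
    (hcompact : ∀ φ : ℕ → ℕ, StrictMono φ → ∃ ψ : ℕ → ℕ, StrictMono ψ ∧
      ∃ g : (Fin n → ℝ) → ℝ, MemM n g ∧
        Tendsto (fun l => ∫ ω, |c (φ (ψ l)) ω - g ω| ∂(lam n)) atTop (nhds 0))
    (hconv : Tendsto (fun l => softDice n m (c l)) atTop (nhds (sInf (SDvals n m)))) :
    Tendsto (fun l => Dice n m (fun ω => if a ≤ c l ω then (1:ℝ) else 0))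
      atTop (nhds (sSup (Dvals n m))) := by
  set t := sSup (Dvals n m) with htdef
  refine tendsto_of_subseq_tendsto fun ns hns => ?_
  obtain ⟨ms, hms, hcomp⟩ := strictMono_subseq_of_tendsto_atTop hns
  obtain ⟨ψ, hψ, g, hg, hL1⟩ := hcompact (ns ∘ ms) hcomp
  refine ⟨ms ∘ ψ, ?_⟩
  have hidx : StrictMono ((ns ∘ ms) ∘ ψ) := hcomp.comp hψ
  have hd : Tendsto (fun l => Dice n m (c ((ns ∘ ms) (ψ l)))) atTop (nhds (Dice n m g)) :=
    SDCal.dice_cont hm hpos hg (fun l => c ((ns ∘ ms) (ψ l))) (fun l => hc _) hL1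
  have hs1 : Tendsto (fun l => softDice n m (c ((ns ∘ ms) (ψ l)))) atTop
      (nhds (sInf (SDvals n m))) := hconv.comp hidx.tendsto_atTop
  have hs2 : Tendsto (fun l => softDice n m (c ((ns ∘ ms) (ψ l)))) atTop
      (nhds (1 - Dice n m g)) := by
    have h := hd.const_sub 1
    exact h.congr fun l => rfl
  have hInf : sInf (SDvals n m) = 1 - t := SDCal.sInf_SDvals hm hpos
  have hgF : Dice n m g = t := by
    have := tendsto_nhds_unique hs1 hs2
    rw [hInf] at this; linarith
  have hest : ∀ l, |Dice n m (fun ω => if a ≤ c ((ns ∘ ms) (ψ l)) ω then (1:ℝ) else 0) - t|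
      ≤ ((2 + t) * (1/a + 1/(1-a)) / vol1 n m)
        * ∫ ω, |c ((ns ∘ ms) (ψ l)) ω - g ω| ∂(lam n) :=
    fun l => SDCal.estimate hm hpos ha (hc _) hg hgF
  have h0 : Tendsto (fun l =>
      |Dice n m (fun ω => if a ≤ c ((ns ∘ ms) (ψ l)) ω then (1:ℝ) else 0) - t|)
      atTop (nhds 0) := by
    have h1 := hL1.const_mul ((2 + t) * (1/a + 1/(1-a)) / vol1 n m)
    rw [mul_zero] at h1
    exact squeeze_zero (fun l => abs_nonneg _) hest h1
  rw [tendsto_iff_dist_tendsto_zero]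
  simpa [Real.dist_eq] using h0
end
end
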